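/- Let G be a graph with no isolated vertices that is M(2,2)-connected (every pair of edges lies in a common (2,2)-circuit). If G' is obtained from G by adding a new edge between two non-adjacent vertices, then G' is M(2,2)-connected. -/

import Mathlib

/-- The vertices incident to an edge set `C`. -/
def edgeVerts {V : Type*} (C : Set (Sym2 V)) : Set V :=
  {v : V | ∃ e ∈ C, v ∈ e}

/-- An edge set `C ⊆ E(G)` is (the edge set of) a `(2,2)`-circuit subgraph of `G`:
`|C| = 2|V(C)| - 1` and every proper nonempty subset `D` of `C` satisfies
`|D| ≤ 2|V(D)| - 2`. -/
def IsCircuitEdges {V : Type*} (G : SimpleGraph V) (C : Set (Sym2 V)) : Prop :=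
  C ⊆ G.edgeSet ∧ C.ncard + 1 = 2 * (edgeVerts C).ncard ∧
  ∀ D : Set (Sym2 V), D ⊆ C → D ≠ C → D ≠ ∅ →
    D.ncard + 2 ≤ 2 * (edgeVerts D).ncard

/-- `G` is `M(2,2)`-connected: no isolated vertices, at least two edges, and every
pair of edges lies in a common `(2,2)`-circuit of `G`. -/
def M22Connected {V : Type*} (G : SimpleGraph V) : Prop :=
  (∀ v : V, ∃ w : V, G.Adj v w) ∧ 2 ≤ G.edgeSet.ncard ∧
  ∀ e ∈ G.edgeSet, ∀ f ∈ G.edgeSet,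
    ∃ C : Set (Sym2 V), IsCircuitEdges G C ∧ e ∈ C ∧ f ∈ C

namespace M22Aux

set_option linter.unusedSectionVars false

variable {V : Type*} [Fintype V]

/-- Sparsity of a finite edge set. -/
def Sp (C : Set (Sym2 V)) : Prop :=
  ∀ D : Set (Sym2 V), D ⊆ C → D ≠ ∅ → D.ncard + 2 ≤ 2 * (edgeVerts D).ncard

lemma sp_mono {C D : Set (Sym2 V)} (h : Sp C) (hDC : D ⊆ C) : Sp D :=
  fun E hE hne => h E (hE.trans hDC) hne

lemma edgeVerts_mono {A B : Set (Sym2 V)} (h : A ⊆ B) : edgeVerts A ⊆ edgeVerts B := by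
  rintro v ⟨e, he, hv⟩; exact ⟨e, h he, hv⟩

lemma edgeVerts_single {u v : V} : edgeVerts {s(u, v)} = {u, v} := by
  ext w
  constructor
  · rintro ⟨e, he, hw⟩
    simp only [Set.mem_singleton_iff] at he
    subst he
    rcases Sym2.mem_iff.1 hw with h | h <;> simp [h]
  · rintro (h | h) <;> exact ⟨s(u, v), rfl, by subst h; simp⟩

lemma edgeVerts_single_ncard {u v : V} (huv : u ≠ v) :
    (edgeVerts ({s(u, v)} : Set (Sym2 V))).ncard = 2 := by
  rw [edgeVerts_single]
  rw [Set.ncard_pair huv]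

lemma sp_single {u v : V} (huv : u ≠ v) : Sp ({s(u, v)} : Set (Sym2 V)) := by
  intro D hD hne
  have : D = {s(u, v)} := by
    apply Set.eq_of_subset_of_ncard_le hD
    have h1 : 1 ≤ D.ncard := by
      rw [Nat.one_le_iff_ne_zero]
      intro h0
      exact hne ((Set.ncard_eq_zero (Set.toFinite D)).1 h0)
    simpa using h1
  subst this
  rw [Set.ncard_singleton, edgeVerts_single_ncard huv]
  omega

lemma circ_not_sp {G : SimpleGraph V} {C : Set (Sym2 V)} (hC : IsCircuitEdges G C) :
    ¬ Sp C := by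
  intro h
  have hC2 := hC.2.1
  have hne : C ≠ ∅ := by
    intro h0; rw [h0] at hC2; simp [edgeVerts] at hC2
  have := h C subset_rfl hne
  omega

lemma circ_nonempty {G : SimpleGraph V} {C : Set (Sym2 V)} (hC : IsCircuitEdges G C) :
    C.Nonempty := by
  rw [Set.nonempty_iff_ne_empty]
  intro h0
  have hC2 := hC.2.1
  rw [h0] at hC2; simp [edgeVerts] at hC2

lemma circ_sp_of_ssubset {G : SimpleGraph V} {C D : Set (Sym2 V)}
    (hC : IsCircuitEdges G C) (hDC : D ⊆ C) (hne : D ≠ C) : Sp D := by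
  intro E hE hEne
  refine hC.2.2 E (hE.trans hDC) ?_ hEne
  intro h
  rw [h] at hE
  exact hne (Set.Subset.antisymm hDC hE)

lemma circ_eq_of_subset {G : SimpleGraph V} {C D : Set (Sym2 V)}
    (hC : IsCircuitEdges G C) (hD : IsCircuitEdges G D) (h : D ⊆ C) : D = C := by
  by_contra hne
  exact circ_not_sp hD (circ_sp_of_ssubset hC h hne)

/-- Characterization of circuits as minimal non-sparse subsets. -/
lemma circ_of_minimal {G : SimpleGraph V} {C : Set (Sym2 V)}
    (hsub : C ⊆ G.edgeSet) (hdep : ¬ Sp C)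
    (hmin : ∀ D : Set (Sym2 V), D ⊆ C → D ≠ C → Sp D) : IsCircuitEdges G C := by
  -- extract witness
  have hwit : ∃ D : Set (Sym2 V), D ⊆ C ∧ D ≠ ∅ ∧ 2 * (edgeVerts D).ncard ≤ D.ncard + 1 := by
    by_contra h
    push_neg at h
    exact hdep (fun D hD hne => by have := h D hD (Set.nonempty_iff_ne_empty.2 hne); omega)
  obtain ⟨D, hDC, hDne, hDcount⟩ := hwit
  have hDeqC : D = C := by
    by_contra hne
    have := hmin D hDC hne D subset_rfl hDne
    omega
  subst hDeqC
  -- now 2 * |V(D)| ≤ |D| + 1 ; get the other inequality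
  have hCne : D ≠ ∅ := hDne
  obtain ⟨e, he⟩ := Set.nonempty_iff_ne_empty.2 hCne
  -- e is a genuine edge, non-diagonal
  have hnd : ¬ e.IsDiag := G.not_isDiag_of_mem_edgeSet (hsub he)
  have hupper : D.ncard + 1 ≤ 2 * (edgeVerts D).ncard := by
    by_cases hsing : D = {e}
    · -- single non-diagonal edge: 2*|V| = 4 > |D|+1 = 2, contradiction with hDcount
      exfalso
      subst hsing
      induction e with
      | _ u v =>
        have huv : u ≠ v := by simpa [Sym2.isDiag_iff_proj_eq] using hnd
        rw [Set.ncard_singleton, edgeVerts_single_ncard huv] at hDcount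
        omega
    · -- D \ {e} is a nonempty proper sparse subset
      have hproper : D \ {e} ≠ D := by
        intro h
        have he' : e ∈ D \ {e} := by rw [h]; exact he
        simp at he'
      have hnonempty : D \ {e} ≠ ∅ := by
        intro h
        apply hsing
        apply Set.Subset.antisymm
        · intro x hx
          by_contra hxe
          have hx' : x ∈ D \ {e} := ⟨hx, hxe⟩
          rw [h] at hx'; exact hx'
        · intro x hx
          rwa [Set.mem_singleton_iff.1 hx]
      have hsp := hmin (D \ {e}) Set.diff_subset hproper (D \ {e}) subset_rfl hnonempty
      have hcard : (D \ {e}).ncard = D.ncard - 1 := Set.ncard_diff_singleton_of_mem he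
      have hv : (edgeVerts (D \ {e})).ncard ≤ (edgeVerts D).ncard :=
        Set.ncard_le_ncard (edgeVerts_mono Set.diff_subset) (Set.toFinite _)
      have hD1 : 1 ≤ D.ncard := by
        rw [Nat.one_le_iff_ne_zero]
        intro h0
        exact hCne ((Set.ncard_eq_zero (Set.toFinite D)).1 h0)
      omega
  refine ⟨hsub, by omega, ?_⟩
  intro E hE hEne hEnonempty
  exact hmin E hE hEne E subset_rfl hEnonempty

/-- Every dependent subset of the edge set contains a circuit. -/
lemma exists_circuit_of_dep {G : SimpleGraph V} :
    ∀ n (X : Set (Sym2 V)), X.ncard ≤ n → X ⊆ G.edgeSet → ¬ Sp X →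
      ∃ C, C ⊆ X ∧ IsCircuitEdges G C := by
  intro n
  induction n with
  | zero =>
    intro X hn hsub hdep
    exfalso
    have : X = ∅ := (Set.ncard_eq_zero (Set.toFinite X)).1 (Nat.le_zero.1 hn)
    subst this
    exact hdep (fun D hD hne => absurd (Set.subset_empty_iff.1 hD) hne)
  | succ n ih =>
    intro X hn hsub hdep
    by_cases hmin : ∀ D : Set (Sym2 V), D ⊆ X → D ≠ X → Sp D
    · exact ⟨X, subset_rfl, circ_of_minimal hsub hdep hmin⟩
    · push_neg at hmin
      obtain ⟨D, hDX, hDne, hDdep⟩ := hmin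
      have hlt : D.ncard < X.ncard := Set.ncard_lt_ncard ⟨hDX, fun h => hDne
        (Set.Subset.antisymm hDX h)⟩ (Set.toFinite X)
      obtain ⟨C, hCD, hC⟩ := ih D (by omega) (hDX.trans hsub) hDdep
      exact ⟨C, hCD.trans hDX, hC⟩

lemma edgeVerts_union {A B : Set (Sym2 V)} :
    edgeVerts (A ∪ B) = edgeVerts A ∪ edgeVerts B := by
  ext v
  simp only [edgeVerts, Set.mem_setOf_eq, Set.mem_union]
  constructor
  · rintro ⟨e, (h | h), hv⟩
    · exact Or.inl ⟨e, h, hv⟩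
    · exact Or.inr ⟨e, h, hv⟩
  · rintro (⟨e, h, hv⟩ | ⟨e, h, hv⟩)
    · exact ⟨e, Or.inl h, hv⟩
    · exact ⟨e, Or.inr h, hv⟩

/-- Weak circuit elimination. -/
lemma weak_elim {G : SimpleGraph V} {C₁ C₂ : Set (Sym2 V)}
    (h1 : IsCircuitEdges G C₁) (h2 : IsCircuitEdges G C₂) (hne : C₁ ≠ C₂)
    {g : Sym2 V} (hg1 : g ∈ C₁) (hg2 : g ∈ C₂) : ¬ Sp ((C₁ ∪ C₂) \ {g}) := by
  have hn12 : ¬ C₁ ⊆ C₂ := fun h => hne (circ_eq_of_subset h2 h1 h)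
  -- the intersection is a proper nonempty sparse subset of C₁
  have hiC : C₁ ∩ C₂ ≠ C₁ := by
    intro h
    apply hn12
    intro x hx
    rw [← h] at hx
    exact hx.2
  have hisp : Sp (C₁ ∩ C₂) := circ_sp_of_ssubset h1 Set.inter_subset_left hiC
  have hine : (C₁ ∩ C₂) ≠ ∅ := by
    intro h
    have : g ∈ (∅ : Set (Sym2 V)) := h ▸ (⟨hg1, hg2⟩ : g ∈ C₁ ∩ C₂)
    exact this
  have hicount : (C₁ ∩ C₂).ncard + 2 ≤ 2 * (edgeVerts (C₁ ∩ C₂)).ncard :=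
    hisp _ subset_rfl hine
  -- edge counting
  have hedge : (C₁ ∪ C₂).ncard + (C₁ ∩ C₂).ncard = C₁.ncard + C₂.ncard :=
    Set.ncard_union_add_ncard_inter C₁ C₂
  -- vertex counting
  have hvert : (edgeVerts (C₁ ∪ C₂)).ncard + (edgeVerts (C₁ ∩ C₂)).ncard ≤
      (edgeVerts C₁).ncard + (edgeVerts C₂).ncard := by
    have h1' : (edgeVerts C₁ ∪ edgeVerts C₂).ncard + (edgeVerts C₁ ∩ edgeVerts C₂).ncard =
        (edgeVerts C₁).ncard + (edgeVerts C₂).ncard :=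
      Set.ncard_union_add_ncard_inter _ _
    have h2' : (edgeVerts (C₁ ∩ C₂)).ncard ≤ (edgeVerts C₁ ∩ edgeVerts C₂).ncard := by
      apply Set.ncard_le_ncard _ (Set.toFinite _)
      intro v hv
      exact ⟨edgeVerts_mono Set.inter_subset_left hv,
             edgeVerts_mono Set.inter_subset_right hv⟩
    rw [edgeVerts_union]
    omega
  have hc1 : C₁.ncard + 1 = 2 * (edgeVerts C₁).ncard := h1.2.1
  have hc2 : C₂.ncard + 1 = 2 * (edgeVerts C₂).ncard := h2.2.1
  -- the deleted set
  set D := (C₁ ∪ C₂) \ {g} with hD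
  have hgu : g ∈ C₁ ∪ C₂ := Or.inl hg1
  have hDcard : D.ncard = (C₁ ∪ C₂).ncard - 1 := Set.ncard_diff_singleton_of_mem hgu
  have hu1 : 1 ≤ (C₁ ∪ C₂).ncard := by
    rw [Nat.one_le_iff_ne_zero]
    intro h0
    have : (C₁ ∪ C₂) = ∅ := (Set.ncard_eq_zero (Set.toFinite _)).1 h0
    rw [this] at hgu; exact hgu
  have hDv : (edgeVerts D).ncard ≤ (edgeVerts (C₁ ∪ C₂)).ncard :=
    Set.ncard_le_ncard (edgeVerts_mono Set.diff_subset) (Set.toFinite _)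
  have hDne : D ≠ ∅ := by
    obtain ⟨x, hx1, hx2⟩ := Set.not_subset.1 hn12
    intro h0
    have hxD : x ∈ D := ⟨Or.inl hx1, fun hxg => hx2 ((Set.mem_singleton_iff.1 hxg) ▸ hg2)⟩
    rw [h0] at hxD; exact hxD
  intro hsp
  have := hsp D subset_rfl hDne
  omega

/-- Strong circuit elimination. -/
lemma strong_elim {G : SimpleGraph V} :
    ∀ n (C D : Set (Sym2 V)), IsCircuitEdges G C → IsCircuitEdges G D →
      (C ∪ D).ncard ≤ n → ∀ g f, g ∈ C → g ∈ D → f ∈ C → f ∉ D →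
      ∃ F, IsCircuitEdges G F ∧ f ∈ F ∧ F ⊆ (C ∪ D) \ {g} := by
  intro n
  induction n with
  | zero =>
    intro C D hC hD hn g f hgC hgD hfC hfD
    exfalso
    have : (C ∪ D) = ∅ := (Set.ncard_eq_zero (Set.toFinite _)).1 (Nat.le_zero.1 hn)
    have : f ∈ (∅ : Set (Sym2 V)) := this ▸ (Or.inl hfC : f ∈ C ∪ D)
    exact this
  | succ n ih =>
    intro C D hC hD hn g f hgC hgD hfC hfD
    have hCD : C ≠ D := fun h => hfD (h ▸ hfC)
    have hdep := weak_elim hC hD hCD hgC hgD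
    have hsub : (C ∪ D) \ {g} ⊆ G.edgeSet := fun x hx =>
      (Set.union_subset hC.1 hD.1) hx.1
    obtain ⟨C₃, hC₃sub, hC₃⟩ :=
      exists_circuit_of_dep (((C ∪ D) \ {g}).ncard) _ le_rfl hsub hdep
    by_cases hfC₃ : f ∈ C₃
    · exact ⟨C₃, hC₃, hfC₃, hC₃sub⟩
    -- C₃ has an element outside C
    have hgC₃ : g ∉ C₃ := fun h => (hC₃sub h).2 rfl
    have hex : ∃ h, h ∈ C₃ ∧ h ∈ D ∧ h ∉ C := by
      by_contra hcon
      push_neg at hcon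
      have hC₃C : C₃ ⊆ C := by
        intro x hx
        rcases (hC₃sub hx).1 with h | h
        · exact h
        · by_contra hxC
          exact hxC (hcon x hx h)
      have := circ_eq_of_subset hC hC₃ hC₃C
      exact hgC₃ (this ▸ hgC)
    obtain ⟨h, hhC₃, hhD, hhC⟩ := hex
    -- first recursive call : circuits D, C₃ with pivot h, keeping g
    have hsub1 : D ∪ C₃ ⊆ C ∪ D := by
      apply Set.union_subset (Set.subset_union_right)
      exact hC₃sub.trans (Set.diff_subset.trans subset_rfl)
    have hf1 : f ∉ D ∪ C₃ := by rintro (h' | h') <;> [exact hfD h'; exact hfC₃ h']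
    have hlt1 : (D ∪ C₃).ncard < (C ∪ D).ncard := by
      apply Set.ncard_lt_ncard _ (Set.toFinite _)
      exact ⟨hsub1, fun hs => hf1 (hs (Or.inl hfC))⟩
    obtain ⟨C₄, hC₄, hgC₄, hC₄sub⟩ :=
      ih D C₃ hD hC₃ (by omega) h g hhD hhC₃ hgD hgC₃
    -- second recursive call : circuits C, C₄ with pivot g, keeping f
    have hC₄sub' : C₄ ⊆ C ∪ D := by
      intro x hx
      rcases (hC₄sub hx).1 with h' | h'
      · exact Or.inr h'
      · exact (hC₃sub h').1
    have hhC₄ : h ∉ C₄ := fun h' => (hC₄sub h').2 rfl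
    have hfC₄ : f ∉ C₄ := fun h' => hf1 ((hC₄sub h').1)
    have hsub2 : C ∪ C₄ ⊆ C ∪ D := Set.union_subset Set.subset_union_left hC₄sub'
    have hlt2 : (C ∪ C₄).ncard < (C ∪ D).ncard := by
      apply Set.ncard_lt_ncard _ (Set.toFinite _)
      refine ⟨hsub2, fun hs => ?_⟩
      have : h ∈ C ∪ C₄ := hs (Or.inr hhD)
      rcases this with h' | h'
      · exact hhC h'
      · exact hhC₄ h'
    obtain ⟨F, hF, hfF, hFsub⟩ := ih C C₄ hC hC₄ (by omega) g f hgC hgC₄ hfC hfC₄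
    refine ⟨F, hF, hfF, hFsub.trans ?_⟩
    intro x hx
    exact ⟨hsub2 hx.1, hx.2⟩

/-- Two circuits sharing an edge: any element of one and any element of the
other lie in a common circuit. -/
lemma conn {G : SimpleGraph V} :
    ∀ n (C₁ C₂ : Set (Sym2 V)), IsCircuitEdges G C₁ → IsCircuitEdges G C₂ →
      (C₁ ∪ C₂).ncard ≤ n → ∀ e f, e ∈ C₁ → f ∈ C₂ → (C₁ ∩ C₂).Nonempty →
      ∃ C, IsCircuitEdges G C ∧ e ∈ C ∧ f ∈ C := by
  intro n
  induction n with
  | zero =>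
    intro C₁ C₂ h1 h2 hn e f he hf hint
    exfalso
    have : (C₁ ∪ C₂) = ∅ := (Set.ncard_eq_zero (Set.toFinite _)).1 (Nat.le_zero.1 hn)
    have : e ∈ (∅ : Set (Sym2 V)) := this ▸ (Or.inl he : e ∈ C₁ ∪ C₂)
    exact this
  | succ n ih =>
    intro C₁ C₂ h1 h2 hn e f he hf hint
    by_cases hf1 : f ∈ C₁
    · exact ⟨C₁, h1, he, hf1⟩
    by_cases he2 : e ∈ C₂
    · exact ⟨C₂, h2, he2, hf⟩
    obtain ⟨g, hg1, hg2⟩ := hint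
    -- C₃ : circuit containing f inside (C₁ ∪ C₂) \ {g}
    obtain ⟨C₃, hC₃, hfC₃, hC₃sub⟩ :=
      strong_elim ((C₂ ∪ C₁).ncard) C₂ C₁ h2 h1 le_rfl g f hg2 hg1 hf hf1
    rw [Set.union_comm C₂ C₁] at hC₃sub
    -- C₄ : circuit containing e inside (C₁ ∪ C₂) \ {g}
    obtain ⟨C₄, hC₄, heC₄, hC₄sub⟩ :=
      strong_elim ((C₁ ∪ C₂).ncard) C₁ C₂ h1 h2 le_rfl g e hg1 hg2 he he2
    by_cases heC₃ : e ∈ C₃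
    · exact ⟨C₃, hC₃, heC₃, hfC₃⟩
    by_cases hfC₄ : f ∈ C₄
    · exact ⟨C₄, hC₄, heC₄, hfC₄⟩
    have hgC₃ : g ∉ C₃ := fun h => (hC₃sub h).2 rfl
    have hgC₄ : g ∉ C₄ := fun h => (hC₄sub h).2 rfl
    -- C₁ ∩ C₃ nonempty
    have hint13 : (C₁ ∩ C₃).Nonempty := by
      by_contra hcon
      rw [Set.not_nonempty_iff_eq_empty] at hcon
      have hC₃2 : C₃ ⊆ C₂ := by
        intro x hx
        rcases (hC₃sub hx).1 with h' | h'
        · exfalso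
          have : x ∈ C₁ ∩ C₃ := ⟨h', hx⟩
          rw [hcon] at this; exact this
        · exact h'
      have := circ_eq_of_subset h2 hC₃ hC₃2
      exact hgC₃ (this ▸ hg2)
    have hsub13 : C₁ ∪ C₃ ⊆ C₁ ∪ C₂ :=
      Set.union_subset Set.subset_union_left (hC₃sub.trans Set.diff_subset)
    by_cases hlt : (C₁ ∪ C₃).ncard < (C₁ ∪ C₂).ncard
    · exact ih C₁ C₃ h1 hC₃ (by omega) e f he hfC₃ hint13
    -- equality case
    push_neg at hlt
    have heq : C₁ ∪ C₃ = C₁ ∪ C₂ :=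
      Set.eq_of_subset_of_ncard_le hsub13 hlt (Set.toFinite _)
    have h21 : ∀ x, x ∈ C₂ → x ∉ C₁ → x ∈ C₃ := by
      intro x hx2 hx1
      have : x ∈ C₁ ∪ C₃ := heq ▸ (Or.inr hx2 : x ∈ C₁ ∪ C₂)
      rcases this with h' | h'
      · exact absurd h' hx1
      · exact h'
    have hint43 : (C₄ ∩ C₃).Nonempty := by
      by_contra hcon
      rw [Set.not_nonempty_iff_eq_empty] at hcon
      have hC₄1 : C₄ ⊆ C₁ := by
        intro x hx
        rcases (hC₄sub hx).1 with h' | h'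
        · exact h'
        · by_cases hx1 : x ∈ C₁
          · exact hx1
          · exfalso
            have : x ∈ C₄ ∩ C₃ := ⟨hx, h21 x h' hx1⟩
            rw [hcon] at this; exact this
      have := circ_eq_of_subset h1 hC₄ hC₄1
      exact hgC₄ (this ▸ hg1)
    have hsub43 : C₄ ∪ C₃ ⊆ (C₁ ∪ C₂) \ {g} := Set.union_subset hC₄sub hC₃sub
    have hgu : g ∈ C₁ ∪ C₂ := Or.inl hg1
    have hcard43 : (C₄ ∪ C₃).ncard < (C₁ ∪ C₂).ncard := by
      have h1' : (C₄ ∪ C₃).ncard ≤ ((C₁ ∪ C₂) \ {g}).ncard :=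
        Set.ncard_le_ncard hsub43 (Set.toFinite _)
      have h2' : ((C₁ ∪ C₂) \ {g}).ncard = (C₁ ∪ C₂).ncard - 1 :=
        Set.ncard_diff_singleton_of_mem hgu
      have h3' : 1 ≤ (C₁ ∪ C₂).ncard := by
        rw [Nat.one_le_iff_ne_zero]
        intro h0
        have : (C₁ ∪ C₂) = ∅ := (Set.ncard_eq_zero (Set.toFinite _)).1 h0
        rw [this] at hgu; exact hgu
      omega
    exact ih C₄ C₃ hC₄ hC₃ (by omega) e f heC₄ hfC₃ hint43

end M22Aux

/-- Adding a new edge between two non-adjacent vertices of an `M(2,2)`-connected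
graph yields an `M(2,2)`-connected graph. -/
theorem addEdge_M22Connected {V : Type*} [Fintype V]
    (G : SimpleGraph V) (hM : M22Connected G)
    (a b : V) (hab : a ≠ b) (hnadj : ¬ G.Adj a b)
    (G' : SimpleGraph V)
    (hG' : ∀ u v : V, G'.Adj u v ↔
      (G.Adj u v ∨ (u = a ∧ v = b) ∨ (u = b ∧ v = a))) :
    M22Connected G' := by
  open M22Aux in
  -- the old edges survive
  have hsubE : G.edgeSet ⊆ G'.edgeSet := by
    intro e he
    induction e with
    | _ u v =>
      rw [SimpleGraph.mem_edgeSet] at *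
      exact (hG' u v).2 (Or.inl he)
  have lift : ∀ {C : Set (Sym2 V)}, IsCircuitEdges G C → IsCircuitEdges G' C :=
    fun h => ⟨h.1.trans hsubE, h.2.1, h.2.2⟩
  set e₀ : Sym2 V := s(a, b) with he₀def
  have he₀ : e₀ ∈ G'.edgeSet := by
    rw [he₀def, SimpleGraph.mem_edgeSet]
    exact (hG' a b).2 (Or.inr (Or.inl ⟨rfl, rfl⟩))
  have he₀G : e₀ ∉ G.edgeSet := by
    rw [he₀def, SimpleGraph.mem_edgeSet]
    exact hnadj
  have hclass : ∀ e ∈ G'.edgeSet, e ∈ G.edgeSet ∨ e = e₀ := by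
    intro e he
    induction e with
    | _ u v =>
      rw [SimpleGraph.mem_edgeSet] at he
      rcases (hG' u v).1 he with h | ⟨h1, h2⟩ | ⟨h1, h2⟩
      · exact Or.inl ((SimpleGraph.mem_edgeSet G).2 h)
      · subst h1; subst h2; exact Or.inr rfl
      · subst h1; subst h2; exact Or.inr (Sym2.eq_swap)
  -- the key construction: a circuit of G' through e₀ and any old edge f
  have key : ∀ f ∈ G.edgeSet, ∃ C, IsCircuitEdges G' C ∧ e₀ ∈ C ∧ f ∈ C := by
    intro f hf
    obtain ⟨wa, hwa⟩ := hM.1 a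
    obtain ⟨wb, hwb⟩ := hM.1 b
    have hfa : s(a, wa) ∈ G.edgeSet := (SimpleGraph.mem_edgeSet G).2 hwa
    have hfb : s(b, wb) ∈ G.edgeSet := (SimpleGraph.mem_edgeSet G).2 hwb
    obtain ⟨C, hC, hfaC, hfbC⟩ := hM.2.2 _ hfa _ hfb
    have hC' : IsCircuitEdges G' C := lift hC
    have haV : a ∈ edgeVerts C := ⟨s(a, wa), hfaC, Sym2.mem_mk_left a wa⟩
    have hbV : b ∈ edgeVerts C := ⟨s(b, wb), hfbC, Sym2.mem_mk_left b wb⟩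
    have he₀C : e₀ ∉ C := fun h => he₀G (hC.1 h)
    obtain ⟨g, hg⟩ := circ_nonempty hC
    set X : Set (Sym2 V) := insert e₀ C \ {g} with hXdef
    have hXsub : X ⊆ G'.edgeSet := by
      rintro x ⟨hx, -⟩
      rcases Set.mem_insert_iff.1 hx with h | h
      · exact h ▸ he₀
      · exact hC'.1 h
    have he₀X : e₀ ∈ X := ⟨Set.mem_insert _ _, fun h =>
      he₀C ((Set.mem_singleton_iff.1 h) ▸ hg)⟩
    have hXne : X ≠ ∅ := fun h => (h ▸ he₀X : e₀ ∈ (∅ : Set (Sym2 V)))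
    have hXcard : X.ncard = C.ncard := by
      have h1 : (insert e₀ C).ncard = C.ncard + 1 := Set.ncard_insert_of_notMem he₀C
      have h2 : X.ncard = (insert e₀ C).ncard - 1 :=
        Set.ncard_diff_singleton_of_mem (Set.mem_insert_of_mem _ hg)
      omega
    have hXV : edgeVerts X ⊆ edgeVerts C := by
      rintro v ⟨e, ⟨he, -⟩, hv⟩
      rcases Set.mem_insert_iff.1 he with h | h
      · subst h
        rcases Sym2.mem_iff.1 hv with h | h
        · exact h ▸ haV
        · exact h ▸ hbV
      · exact ⟨e, h, hv⟩
    have hXdep : ¬ Sp X := by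
      intro hsp
      have h1 := hsp X subset_rfl hXne
      have h2 : (edgeVerts X).ncard ≤ (edgeVerts C).ncard :=
        Set.ncard_le_ncard hXV (Set.toFinite _)
      have h3 := hC.2.1
      omega
    obtain ⟨C₀, hC₀X, hC₀⟩ := exists_circuit_of_dep X.ncard X le_rfl hXsub hXdep
    have he₀C₀ : e₀ ∈ C₀ := by
      by_contra hcon
      have hC₀C : C₀ ⊆ C := by
        intro x hx
        rcases Set.mem_insert_iff.1 (hC₀X hx).1 with h | h
        · exact absurd (h ▸ hx) hcon
        · exact h
      have heq := circ_eq_of_subset hC' hC₀ hC₀C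
      have : g ∈ C₀ := heq ▸ hg
      exact (hC₀X this).2 rfl
    -- find an element of C₀ other than e₀
    have hC₀ne : C₀ ≠ {e₀} := by
      intro h
      exact circ_not_sp hC₀ (h ▸ sp_single hab)
    have hex : ∃ g', g' ∈ C₀ ∧ g' ≠ e₀ := by
      by_contra hcon
      push_neg at hcon
      apply hC₀ne
      apply Set.Subset.antisymm
      · intro x hx; exact Set.mem_singleton_iff.2 (hcon x hx)
      · intro x hx; exact (Set.mem_singleton_iff.1 hx) ▸ he₀C₀
    obtain ⟨g', hg'C₀, hg'ne⟩ := hex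
    have hg'G : g' ∈ G.edgeSet := by
      rcases Set.mem_insert_iff.1 (hC₀X hg'C₀).1 with h | h
      · exact absurd h hg'ne
      · exact hC.1 h
    obtain ⟨Cf, hCf, hg'Cf, hfCf⟩ := hM.2.2 g' hg'G f hf
    exact conn ((C₀ ∪ Cf).ncard) C₀ Cf hC₀ (lift hCf) le_rfl e₀ f he₀C₀ hfCf
      ⟨g', hg'C₀, hg'Cf⟩
  refine ⟨?_, ?_, ?_⟩
  · intro v
    obtain ⟨w, hw⟩ := hM.1 v
    exact ⟨w, (hG' v w).2 (Or.inl hw)⟩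
  · exact le_trans hM.2.1 (Set.ncard_le_ncard hsubE (Set.toFinite _))
  · intro e he f hf
    have hGne : G.edgeSet.Nonempty := by
      apply Set.nonempty_of_ncard_ne_zero
      have := hM.2.1; omega
    rcases hclass e he with heG | heE <;> rcases hclass f hf with hfG | hfE
    · obtain ⟨C, hC, h1, h2⟩ := hM.2.2 e heG f hfG
      exact ⟨C, lift hC, h1, h2⟩
    · subst hfE
      obtain ⟨C, hC, h1, h2⟩ := key e heG
      exact ⟨C, hC, h2, h1⟩
    · subst heE
      obtain ⟨C, hC, h1, h2⟩ := key f hfG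
      exact ⟨C, hC, h1, h2⟩
    · subst heE; subst hfE
      obtain ⟨f₁, hf₁⟩ := hGne
      obtain ⟨C, hC, h1, h2⟩ := key f₁ hf₁
      exact ⟨C, hC, h1, h1⟩
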